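/- The multiplicative sum ∑_{d ≤ D} d/(d⁴)₀ is O(D^ε) for every ε > 0, where for a natural number n, n₀ denotes the least natural number m with n | m³. -/

import Mathlib

/-- `cube0 n` is the least positive natural number `m` with `n ∣ m ^ 3`. -/
noncomputable def cube0 (n : ℕ) : ℕ := sInf {m : ℕ | 0 < m ∧ n ∣ m ^ 3}

def pf (g : ℕ → ℕ) (d : ℕ) : ℕ := ∏ p ∈ d.primeFactors, p ^ g (d.factorization p)

lemma pf_pos (g : ℕ → ℕ) (d : ℕ) : 0 < pf g d := by
  apply Finset.prod_pos
  intro p hp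
  exact pow_pos (Nat.prime_of_mem_primeFactors hp).pos _

lemma pf_factorization (g : ℕ → ℕ) (hg : g 0 = 0) (d : ℕ) (q : ℕ) :
    (pf g d).factorization q = g (d.factorization q) := by
  unfold pf
  rw [Nat.factorization_prod (fun p hp => pow_ne_zero _ (Nat.prime_of_mem_primeFactors hp).pos.ne')]
  rw [Finset.sum_apply']
  by_cases hq : q ∈ d.primeFactors
  · rw [Finset.sum_eq_single q]
    · rw [(Nat.prime_of_mem_primeFactors hq).factorization_pow, Finsupp.single_eq_same]
    · intro p hp hpq
      rw [(Nat.prime_of_mem_primeFactors hp).factorization_pow, Finsupp.single_eq_of_ne' hpq]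
    · intro h; exact absurd hq h
  · rw [Finset.sum_eq_zero, show d.factorization q = 0 from
      Finsupp.notMem_support_iff.mp (by rwa [Nat.support_factorization]), hg]
    intro p hp
    rw [(Nat.prime_of_mem_primeFactors hp).factorization_pow, Finsupp.single_eq_of_ne']
    exact fun h => hq (h ▸ hp)

def sF (d : ℕ) : ℕ := pf (fun a => if a % 3 = 1 then 1 else 0) d
def tF (d : ℕ) : ℕ := pf (fun a => if a % 3 = 2 then 1 else 0) d
def cF (d : ℕ) : ℕ := pf (fun a => a / 3) d

lemma decomp (d : ℕ) (hd : d ≠ 0) : sF d * (tF d) ^ 2 * (cF d) ^ 3 = d := by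
  conv_rhs => rw [← Nat.factorization_prod_pow_eq_self hd]
  unfold sF tF cF pf
  rw [← Finset.prod_pow, ← Finset.prod_pow, ← Finset.prod_mul_distrib, ← Finset.prod_mul_distrib,
    Finsupp.prod]
  refine Finset.prod_congr (Nat.support_factorization d).symm ?_
  intro p hp
  rw [← pow_mul, ← pow_mul, ← pow_add, ← pow_add]
  congr 1
  beta_reduce
  split_ifs <;> omega

lemma key (d m : ℕ) (hd : d ≠ 0) (hm : m ≠ 0) (h : d ^ 4 ∣ m ^ 3) :
    d * (sF d * tF d * cF d) ∣ m := by
  have hs : sF d ≠ 0 := (pf_pos _ _).ne'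
  have ht : tF d ≠ 0 := (pf_pos _ _).ne'
  have hc : cF d ≠ 0 := (pf_pos _ _).ne'
  rw [← Nat.factorization_le_iff_dvd (by positivity) hm, Finsupp.le_def]
  intro q
  have h4 : 4 * d.factorization q ≤ 3 * m.factorization q := by
    have := (Nat.factorization_le_iff_dvd (pow_ne_zero 4 hd) (pow_ne_zero 3 hm)).mpr h
    rw [Finsupp.le_def] at this
    have := this q
    simpa [Nat.factorization_pow] using this
  rw [Nat.factorization_mul hd (by positivity), Nat.factorization_mul (by positivity) hc,
    Nat.factorization_mul hs ht]
  simp only [Finsupp.add_apply]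
  unfold sF tF cF
  rw [pf_factorization _ rfl, pf_factorization _ rfl, pf_factorization _ rfl]
  split_ifs <;> omega

lemma sF_pos (d : ℕ) : 0 < sF d := pf_pos _ _
lemma tF_pos (d : ℕ) : 0 < tF d := pf_pos _ _
lemma cF_pos (d : ℕ) : 0 < cF d := pf_pos _ _

lemma cube0_spec (n : ℕ) (hn : n ≠ 0) : 0 < cube0 n ∧ n ∣ (cube0 n) ^ 3 := by
  have h2 : (n ^ 2) ∈ {m : ℕ | 0 < m ∧ n ∣ m ^ 3} := by
    constructor
    · positivity
    · rw [← pow_mul]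
      exact dvd_pow_self n (by norm_num)
  exact Nat.sInf_mem ⟨_, h2⟩

theorem sum_d_div_cube0_d4 :
    ∀ ε : ℝ, 0 < ε → ∃ C : ℝ, 0 < C ∧ ∀ D : ℝ, 1 ≤ D →
      ∑ d ∈ Finset.Icc 1 ⌊D⌋₊, (d : ℝ) / (cube0 (d ^ 4) : ℝ) ≤ C * D ^ ε := by
  intro ε hε
  refine ⟨(1 + 3 / ε) ^ 3, by positivity, ?_⟩
  intro D hD
  have hD0 : (0:ℝ) < D := lt_of_lt_of_le one_pos hD
  set N := ⌊D⌋₊ with hN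
  set A := Finset.Icc 1 N with hA
  have hmem : ∀ d ∈ A, sF d ∈ A ∧ tF d ∈ A ∧ cF d ∈ A := by
    intro d hd
    rw [hA, Finset.mem_Icc] at hd
    obtain ⟨hd1, hdN⟩ := hd
    have hdne : d ≠ 0 := by omega
    have hdec := decomp d hdne
    have hs : sF d ∣ d := by
      conv_rhs => rw [← hdec]
      exact dvd_mul_of_dvd_left (dvd_mul_right _ _) _
    have ht : tF d ∣ d := by
      conv_rhs => rw [← hdec]
      exact dvd_mul_of_dvd_left (dvd_mul_of_dvd_right (dvd_pow_self _ two_ne_zero) _) _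
    have hc : cF d ∣ d := by
      conv_rhs => rw [← hdec]
      exact dvd_mul_of_dvd_right (dvd_pow_self _ three_ne_zero) _
    refine ⟨Finset.mem_Icc.mpr ⟨sF_pos d, (Nat.le_of_dvd (by omega) hs).trans hdN⟩,
      Finset.mem_Icc.mpr ⟨tF_pos d, (Nat.le_of_dvd (by omega) ht).trans hdN⟩,
      Finset.mem_Icc.mpr ⟨cF_pos d, (Nat.le_of_dvd (by omega) hc).trans hdN⟩⟩
  have step1 : ∑ d ∈ A, (d : ℝ) / (cube0 (d ^ 4) : ℝ)
      ≤ ∑ d ∈ A, (1 : ℝ) / ((sF d : ℝ) * tF d * cF d) := by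
    apply Finset.sum_le_sum
    intro d hd
    rw [hA, Finset.mem_Icc] at hd
    have hdne : d ≠ 0 := by omega
    obtain ⟨hm0, hmdvd⟩ := cube0_spec (d ^ 4) (by positivity)
    have hkey := key d (cube0 (d ^ 4)) hdne hm0.ne' hmdvd
    have hle : (d * (sF d * tF d * cF d) : ℕ) ≤ cube0 (d ^ 4) := Nat.le_of_dvd hm0 hkey
    have hstc : (0:ℝ) < (sF d : ℝ) * tF d * cF d := by
      have := sF_pos d; have := tF_pos d; have := cF_pos d; positivity
    rw [div_le_div_iff₀ (by exact_mod_cast hm0) hstc]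
    have : ((d : ℝ)) * ((sF d : ℝ) * tF d * cF d) ≤ (cube0 (d ^ 4) : ℝ) := by
      exact_mod_cast hle
    linarith
  have step2 : ∑ d ∈ A, (1 : ℝ) / ((sF d : ℝ) * tF d * cF d)
      ≤ ∑ x ∈ A ×ˢ A ×ˢ A, (1 : ℝ) / ((x.1 : ℝ) * x.2.1 * x.2.2) := by
    have hinj : ∀ x ∈ A, ∀ y ∈ A, (fun d => (sF d, tF d, cF d)) x = (fun d => (sF d, tF d, cF d)) y → x = y := by
      intro x hx y hy hxy
      simp only [Prod.mk.injEq] at hxy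
      rw [hA, Finset.mem_Icc] at hx hy
      rw [← decomp x (by omega), ← decomp y (by omega), hxy.1, hxy.2.1, hxy.2.2]
    calc ∑ d ∈ A, (1 : ℝ) / ((sF d : ℝ) * tF d * cF d)
        = ∑ x ∈ A.image (fun d => (sF d, tF d, cF d)), (1 : ℝ) / ((x.1 : ℝ) * x.2.1 * x.2.2) :=
          (Finset.sum_image (f := fun x : ℕ × ℕ × ℕ => (1:ℝ)/((x.1:ℝ)*x.2.1*x.2.2)) hinj).symm
      _ ≤ _ := by
          apply Finset.sum_le_sum_of_subset_of_nonneg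
          · intro x hx
            obtain ⟨d, hd, rfl⟩ := Finset.mem_image.mp hx
            obtain ⟨h1, h2, h3⟩ := hmem d hd
            simp [Finset.mem_product, h1, h2, h3]
          · intro x _ _
            positivity
  have step3 : ∑ x ∈ A ×ˢ A ×ˢ A, (1 : ℝ) / ((x.1 : ℝ) * x.2.1 * x.2.2)
      = (∑ i ∈ A, (1 : ℝ) / i) ^ 3 := by
    rw [Finset.sum_product]
    simp_rw [Finset.sum_product, one_div, mul_inv, mul_assoc, ← Finset.mul_sum,
      ← Finset.sum_mul]
    ring
  have hharm : ∑ i ∈ A, (1 : ℝ) / i ≤ 1 + Real.log D := by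
    have h1 : ∑ i ∈ A, (1 : ℝ) / i = (harmonic N : ℝ) := by
      rw [harmonic_eq_sum_Icc]
      push_cast
      simp [one_div, hA]
    rw [h1, hN]
    exact harmonic_floor_le_one_add_log D hD
  have hHnn : (0:ℝ) ≤ ∑ i ∈ A, (1 : ℝ) / i := by
    apply Finset.sum_nonneg; intro i _; positivity
  have hlog : 1 + Real.log D ≤ (1 + 3 / ε) * D ^ (ε / 3) := by
    have hr1 : (1:ℝ) ≤ D ^ (ε / 3) := Real.one_le_rpow hD (by positivity)
    have h2 : Real.log (D ^ (ε / 3)) ≤ D ^ (ε / 3) - 1 :=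
      Real.log_le_sub_one_of_pos (by positivity)
    rw [Real.log_rpow hD0] at h2
    have h3 : ε * Real.log D ≤ 3 * (D ^ (ε / 3) - 1) := by nlinarith
    have h4 : Real.log D ≤ 3 / ε * D ^ (ε / 3) - 3 / ε := by
      have h5 : ε * Real.log D / ε ≤ 3 * (D ^ (ε / 3) - 1) / ε := by gcongr
      rw [mul_div_cancel_left₀ _ hε.ne'] at h5
      calc Real.log D ≤ 3 * (D ^ (ε / 3) - 1) / ε := h5
        _ = 3 / ε * D ^ (ε / 3) - 3 / ε := by ring
    have h6 : (0:ℝ) < 3 / ε := by positivity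
    nlinarith
  have hrpow : ((D : ℝ) ^ (ε / 3)) ^ 3 = D ^ ε := by
    rw [← Real.rpow_natCast (D ^ (ε / 3)) 3, ← Real.rpow_mul hD0.le]
    norm_num
  calc ∑ d ∈ A, (d : ℝ) / (cube0 (d ^ 4) : ℝ)
      ≤ (∑ i ∈ A, (1 : ℝ) / i) ^ 3 := by rw [← step3]; exact step1.trans step2
    _ ≤ (1 + Real.log D) ^ 3 := by gcongr
    _ ≤ ((1 + 3 / ε) * D ^ (ε / 3)) ^ 3 := by
        gcongr
        have : (0:ℝ) ≤ Real.log D := Real.log_nonneg hD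
        linarith
    _ = (1 + 3 / ε) ^ 3 * D ^ ε := by rw [mul_pow, hrpow]
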